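/- Let G be a finite group having the elementary abelian group (ℤ_p)^m as a quotient group (i.e., there is a surjective group homomorphism from G onto (ℤ_p)^m), where p is prime and m ≥ 1, and let (A, B) be a near-factorization of G. If p is an odd prime, then |A|^{p−1} ≡ 1 (mod p^m) and |B|^{p−1} ≡ 1 (mod p^m). If p = 2, then either |A| ≡ 1 and |B| ≡ −1 (mod 2^m), or |A| ≡ −1 and |B| ≡ 1 (mod 2^m). -/

import Mathlib

open Finset
open scoped Pointwise

set_option maxHeartbeats 1000000
set_option linter.unusedSectionVars false


section HelpersX
variable {K : Type*} [CommRing K] [IsDomain K]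

lemma sum_char_eq_zero_add {V : Type*} [AddCommGroup V] [Fintype V]
    (χ : V → K) (hχ : ∀ x y, χ (x + y) = χ x * χ y) (x₀ : V) (h0 : χ x₀ ≠ 1) :
    ∑ x, χ x = 0 := by
  have key : χ x₀ * ∑ x, χ x = ∑ x, χ x := by
    rw [Finset.mul_sum]
    exact Fintype.sum_bijective (x₀ + ·) (Equiv.addLeft x₀).bijective _ _
      (fun x => (hχ x₀ x).symm)
  have h : (χ x₀ - 1) * ∑ x, χ x = 0 := by ring_nf; linear_combination key
  rcases mul_eq_zero.mp h with h | h
  · exact absurd (sub_eq_zero.mp h) h0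
  · exact h

end HelpersX

section Xi
variable {p : ℕ} [Fact p.Prime] {ζ : ℂ}

lemma xi_pow_mod (hζ : IsPrimitiveRoot ζ p) (n : ℕ) : ζ ^ (n % p) = ζ ^ n := by
  conv_rhs => rw [← Nat.div_add_mod n p]
  rw [pow_add, pow_mul, hζ.pow_eq_one, one_pow, one_mul]

lemma xi_add (hζ : IsPrimitiveRoot ζ p) (a b : ZMod p) :
    ζ ^ (a + b).val = ζ ^ a.val * ζ ^ b.val := by
  haveI : NeZero p := ⟨(Fact.out : p.Prime).ne_zero⟩
  rw [← pow_add, ZMod.val_add, xi_pow_mod hζ]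

lemma xi_ne_one (hζ : IsPrimitiveRoot ζ p) {k : ZMod p} (hk : k ≠ 0) : ζ ^ k.val ≠ 1 := by
  haveI : NeZero p := ⟨(Fact.out : p.Prime).ne_zero⟩
  have h1 : 0 < k.val := Nat.pos_of_ne_zero (fun h => hk ((ZMod.val_eq_zero k).mp h))
  exact hζ.pow_ne_one_of_pos_of_lt h1.ne' (ZMod.val_lt k)

lemma xi_sum_prod (hζ : IsPrimitiveRoot ζ p) {ι : Type*} (s : Finset ι) (g : ι → ZMod p) :
    ∏ i ∈ s, ζ ^ (g i).val = ζ ^ (∑ i ∈ s, g i).val := by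
  induction s using Finset.cons_induction with
  | empty => simp
  | cons a s ha ih => rw [Finset.prod_cons, Finset.sum_cons, xi_add hζ, ih]

lemma xi_sum_univ (hζ : IsPrimitiveRoot ζ p) : ∑ k : ZMod p, ζ ^ k.val = 0 :=
  sum_char_eq_zero_add (fun k : ZMod p => ζ ^ k.val) (fun x y => xi_add hζ x y) 1
    (xi_ne_one hζ one_ne_zero)

end Xi

section IP
variable {p m : ℕ} [Fact p.Prime]

/-- inner product on H = Fin m → ZMod p -/
def ip (v w : Fin m → ZMod p) : ZMod p := ∑ i, v i * w i

lemma ip_comm (v w : Fin m → ZMod p) : ip v w = ip w v := by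
  unfold ip; exact Finset.sum_congr rfl (fun i _ => mul_comm _ _)

lemma ip_add_left (v v' w : Fin m → ZMod p) : ip (v + v') w = ip v w + ip v' w := by
  unfold ip; rw [← Finset.sum_add_distrib]
  exact Finset.sum_congr rfl (fun i _ => by simp [add_mul])

lemma ip_add_right (v w w' : Fin m → ZMod p) : ip v (w + w') = ip v w + ip v w' := by
  rw [ip_comm, ip_add_left, ip_comm w v, ip_comm w' v]

lemma ip_smul_right (t : ZMod p) (v w : Fin m → ZMod p) : ip v (t • w) = t * ip v w := by
  unfold ip; rw [Finset.mul_sum]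
  exact Finset.sum_congr rfl (fun i _ => by simp [Pi.smul_apply, smul_eq_mul]; ring)

lemma ip_smul_left (t : ZMod p) (v w : Fin m → ZMod p) : ip (t • v) w = t * ip v w := by
  rw [ip_comm, ip_smul_right, ip_comm]

lemma ip_zero_left (w : Fin m → ZMod p) : ip 0 w = 0 := by
  unfold ip; simp

lemma ip_zero_right (w : Fin m → ZMod p) : ip w 0 = 0 := by
  rw [ip_comm, ip_zero_left]

lemma ip_sum_right {ι : Type*} (s : Finset ι) (v : Fin m → ZMod p) (w : ι → (Fin m → ZMod p)) :
    ip v (∑ i ∈ s, w i) = ∑ i ∈ s, ip v (w i) := by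
  induction s using Finset.cons_induction with
  | empty => simp [ip_zero_right]
  | cons a s ha ih => rw [Finset.sum_cons, Finset.sum_cons, ip_add_right, ih]

lemma ip_exists_ne (v : Fin m → ZMod p) (hv : v ≠ 0) : ∃ w, ip w v ≠ 0 := by
  have : ∃ i, v i ≠ 0 := by
    by_contra hc
    push_neg at hc
    exact hv (funext hc)
  obtain ⟨i₀, hi₀⟩ := this
  refine ⟨Pi.single i₀ 1, ?_⟩
  rw [ip_comm]
  have : ip v (Pi.single i₀ 1) = v i₀ := by
    unfold ip
    rw [Finset.sum_eq_single i₀]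
    · simp
    · intro b _ hb; simp [Pi.single_apply, hb]
    · intro hb; exact absurd (Finset.mem_univ i₀) hb
  rw [this]; exact hi₀

/-- the key vanishing sum over H -/
lemma sum_xi_ip {ζ : ℂ} (hζ : IsPrimitiveRoot ζ p) (w : Fin m → ZMod p) :
    ∑ v : Fin m → ZMod p, ζ ^ (ip v w).val =
      if w = 0 then ((p ^ m : ℕ) : ℂ) else 0 := by
  by_cases hw : w = 0
  · subst hw
    simp only [ip_zero_right]
    simp [Finset.card_univ, ZMod.card]
  · rw [if_neg hw]
    obtain ⟨v₀, hv₀⟩ := ip_exists_ne w hw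
    refine sum_char_eq_zero_add (fun v => ζ ^ (ip v w).val) ?_ v₀ ?_
    · intro x y
      show ζ ^ (ip (x + y) w).val = ζ ^ (ip x w).val * ζ ^ (ip y w).val
      rw [ip_add_left, xi_add hζ]
    · exact xi_ne_one hζ hv₀
section ProdChar
variable {p : ℕ} [Fact p.Prime] {ζ : ℂ}

lemma prod_char_sum_int (hζ : IsPrimitiveRoot ζ p)
    {G : Type*} [DecidableEq G] [Fintype G] (A : Finset G) (c : G → ZMod p) :
    ∃ KK : ℤ,
      (∏ t : (ZMod p)ˣ, ∑ a ∈ A, ζ ^ (((t : ZMod p)) * c a).val) = (KK : ℂ) ∧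
      KK ≡ ((A.card : ℤ)) ^ (p - 1) [ZMOD (p : ℤ)] := by
  classical
  haveI : NeZero p := ⟨(Fact.out : p.Prime).ne_zero⟩
  set UU : Finset ((ZMod p)ˣ → G) := Fintype.piFinset (fun _ => A) with hUU
  set e : ((ZMod p)ˣ → G) → ZMod p := fun u => ∑ t : (ZMod p)ˣ, (t : ZMod p) * c (u t) with he
  have step1 : (∏ t : (ZMod p)ˣ, ∑ a ∈ A, ζ ^ (((t : ZMod p)) * c a).val)
      = ∑ u ∈ UU, ζ ^ (e u).val := by
    rw [Finset.prod_univ_sum]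
    exact Finset.sum_congr rfl (fun u _ => xi_sum_prod hζ univ _)
  set Kc : ZMod p → ℕ := fun k => (UU.filter (fun u => e u = k)).card with hKc
  have step2 : ∑ u ∈ UU, ζ ^ (e u).val = ∑ k : ZMod p, (Kc k : ℂ) * ζ ^ k.val := by
    rw [← Finset.sum_fiberwise UU e (fun u => ζ ^ (e u).val)]
    refine Finset.sum_congr rfl (fun k _ => ?_)
    have hterm : ∀ u ∈ UU.filter (fun u => e u = k), ζ ^ (e u).val = ζ ^ k.val := by
      intro u hu; rw [(Finset.mem_filter.mp hu).2]
    rw [Finset.sum_congr rfl hterm, Finset.sum_const, nsmul_eq_mul]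
  have hscale : ∀ (s : (ZMod p)ˣ) (u : (ZMod p)ˣ → G),
      e (fun t => u (t * s)) = ((s⁻¹ : (ZMod p)ˣ) : ZMod p) * e u := by
    intro s u
    show (∑ t : (ZMod p)ˣ, (t : ZMod p) * c (u (t * s)))
      = ((s⁻¹ : (ZMod p)ˣ) : ZMod p) * ∑ t : (ZMod p)ˣ, (t : ZMod p) * c (u t)
    rw [Finset.mul_sum]
    refine Fintype.sum_equiv (Equiv.mulRight s) _ _ (fun t => ?_)
    simp only [Equiv.coe_mulRight]
    rw [mul_comm t s, Units.val_mul, Units.val_inv_eq_inv_val,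
      mul_assoc, inv_mul_cancel_left₀ (Units.ne_zero s)]
  have step3 : ∀ k : ZMod p, k ≠ 0 → Kc k = Kc 1 := by
    intro k hk
    obtain ⟨s, hs⟩ : ∃ s : (ZMod p)ˣ, (s : ZMod p) = k := ⟨(Ne.isUnit hk).unit, rfl⟩
    have hmemUU : ∀ (s' : (ZMod p)ˣ) (u : (ZMod p)ˣ → G), u ∈ UU →
        (fun t => u (t * s')) ∈ UU := by
      intro s' u hu
      simp only [hUU, Fintype.mem_piFinset] at hu ⊢
      exact fun t => hu _
    show Kc k = Kc 1
    simp only [hKc]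
    refine Finset.card_bij' (fun u _ => fun t => u (t * s)) (fun u _ => fun t => u (t * s⁻¹))
      ?_ ?_ ?_ ?_
    · intro u hu
      rw [Finset.mem_filter] at hu ⊢
      refine ⟨hmemUU s u hu.1, ?_⟩
      rw [hscale s u, hu.2, Units.val_inv_eq_inv_val, ← hs, inv_mul_cancel₀ (Units.ne_zero s)]
    · intro u hu
      rw [Finset.mem_filter] at hu ⊢
      refine ⟨hmemUU s⁻¹ u hu.1, ?_⟩
      rw [hscale s⁻¹ u, hu.2, mul_one, inv_inv, hs]
    · intro u _; funext t; simp [mul_assoc]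
    · intro u _; funext t; simp [mul_assoc]
  have step4 : ∑ k : ZMod p, Kc k = A.card ^ (p - 1) := by
    have h1 : UU.card = ∑ k : ZMod p, Kc k :=
      Finset.card_eq_sum_card_fiberwise (fun u _ => Finset.mem_univ (e u))
    have h2 : UU.card = A.card ^ (p - 1) := by
      rw [hUU, Fintype.card_piFinset, Finset.prod_const, Finset.card_univ,
        ZMod.card_units_eq_totient, Nat.totient_prime (Fact.out : p.Prime)]
    omega
  refine ⟨(Kc 0 : ℤ) - (Kc 1 : ℤ), ?_, ?_⟩
  · rw [step1, step2]
    have hsplit : ∑ k : ZMod p, (Kc k : ℂ) * ζ ^ k.val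
        = ∑ k : ZMod p, ((Kc k : ℂ) - (Kc 1 : ℂ)) * ζ ^ k.val
          + (Kc 1 : ℂ) * ∑ k : ZMod p, ζ ^ k.val := by
      rw [Finset.mul_sum, ← Finset.sum_add_distrib]
      exact Finset.sum_congr rfl (fun k _ => by ring)
    rw [hsplit, xi_sum_univ hζ, mul_zero, add_zero]
    rw [Finset.sum_eq_single 0]
    · push_cast; simp
    · intro k _ hk
      rw [step3 k hk]; ring
    · intro hk; exact absurd (Finset.mem_univ _) hk
  · have hsum : ∑ k : ZMod p, (Kc k : ℤ) = ((A.card : ℤ)) ^ (p - 1) := by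
      exact_mod_cast congrArg (Nat.cast : ℕ → ℤ) step4
    have hsplit : ∑ k : ZMod p, (Kc k : ℤ)
        = (Kc 0 : ℤ) + ∑ k ∈ (univ : Finset (ZMod p)) \ {0}, (Kc k : ℤ) := by
      rw [Finset.sum_sdiff_eq_sub (by simp), Finset.sum_singleton]
      ring
    have hconst : ∑ k ∈ (univ : Finset (ZMod p)) \ {0}, (Kc k : ℤ)
        = (p - 1 : ℕ) * (Kc 1 : ℤ) := by
      have : ∀ k ∈ (univ : Finset (ZMod p)) \ {0}, (Kc k : ℤ) = (Kc 1 : ℤ) := by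
        intro k hk
        rw [Finset.mem_sdiff, Finset.mem_singleton] at hk
        rw [step3 k hk.2]
      rw [Finset.sum_congr rfl this, Finset.sum_const, Finset.card_sdiff_of_subset (by simp),
        Finset.card_univ, ZMod.card, Finset.card_singleton, nsmul_eq_mul]
    have hcardp : (1:ℕ) ≤ p := (Fact.out : p.Prime).one_lt.le
    have hcast : ((p - 1 : ℕ) : ℤ) = (p : ℤ) - 1 := by
      omega
    have key : (Kc 0 : ℤ) + ((p : ℤ) - 1) * (Kc 1 : ℤ) = ((A.card : ℤ)) ^ (p - 1) := by
      rw [← hcast, ← hconst, ← hsum, hsplit]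
    exact (Int.modEq_iff_dvd.mpr ⟨(Kc 1 : ℤ), by linarith⟩)

end ProdChar
section CruxOdd

lemma sum_mul_pairs {G : Type*} [Group G] [Fintype G] [DecidableEq G]
    {A B : Finset G} (h1 : A.card * B.card = Fintype.card G - 1)
    (h2 : A * B = Finset.univ \ {1}) {R : Type*} [AddCommMonoid R] (φ : G → R) :
    ∑ x ∈ A ×ˢ B, φ (x.1 * x.2) = ∑ g ∈ Finset.univ \ {1}, φ g := by
  have hinj : Set.InjOn (fun x : G × G => x.1 * x.2) ↑(A ×ˢ B) := by
    rw [← Finset.card_image_iff, ← Finset.mul_def, h2]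
    rw [Finset.card_sdiff_of_subset (by simp), Finset.card_univ, Finset.card_singleton,
      Finset.card_product]
    omega
  rw [← h2, Finset.mul_def, Finset.sum_image hinj]

lemma sum_char_eq_zero_mul {G : Type*} [Group G] [Fintype G] {K : Type*} [CommRing K] [IsDomain K]
    (χ : G → K) (hχ : ∀ x y, χ (x * y) = χ x * χ y) (g₀ : G) (h0 : χ g₀ ≠ 1) :
    ∑ g, χ g = 0 := by
  have key : χ g₀ * ∑ g, χ g = ∑ g, χ g := by
    rw [Finset.mul_sum]
    exact Fintype.sum_bijective (g₀ * ·) (Equiv.mulLeft g₀).bijective _ _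
      (fun x => (hχ g₀ x).symm)
  have h : (χ g₀ - 1) * ∑ g, χ g = 0 := by ring_nf; linear_combination key
  rcases mul_eq_zero.mp h with h | h
  · exact absurd (sub_eq_zero.mp h) h0
  · exact h

lemma pm_dvd_cardG {G : Type*} [Group G] [Fintype G]
    {p m : ℕ} [NeZero p] (f : G →* Multiplicative (Fin m → ZMod p))
    (hf : Function.Surjective f) : p ^ m ∣ Fintype.card G := by
  have h1 : Nat.card G = Nat.card (G ⧸ f.ker) * Nat.card f.ker :=
    Subgroup.card_eq_card_quotient_mul_card_subgroup f.ker
  have h2 : Nat.card (G ⧸ f.ker) = Nat.card (Multiplicative (Fin m → ZMod p)) :=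
    Nat.card_congr (QuotientGroup.quotientKerEquivOfSurjective f hf).toEquiv
  have h3 : Nat.card (Multiplicative (Fin m → ZMod p)) = p ^ m := by
    rw [Nat.card_congr (Multiplicative.ofAdd).symm, Nat.card_eq_fintype_card,
      Fintype.card_fun, ZMod.card, Fintype.card_fin]
  rw [← Nat.card_eq_fintype_card, h1, h2, h3]
  exact Dvd.intro _ rfl

lemma crux_odd {G : Type*} [Group G] [Fintype G] [DecidableEq G]
    (p m : ℕ) (hp : p.Prime) (hodd : Odd p) (hm : 1 ≤ m)
    (f : G →* Multiplicative (Fin m → ZMod p)) (hf : Function.Surjective f)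
    (A B : Finset G) (h1 : A.card * B.card = Fintype.card G - 1)
    (h2 : A * B = Finset.univ \ {1}) :
    (A.card : ℤ) ^ (p - 1) ≡ 1 [ZMOD (p : ℤ) ^ m] := by
  classical
  haveI hfact : Fact p.Prime := ⟨hp⟩
  haveI : NeZero p := ⟨hp.ne_zero⟩
  have hp2 : p ≠ 2 := by
    rintro rfl
    exact (Nat.not_odd_iff_even.mpr even_two) hodd
  set ζ : ℂ := Complex.exp (2 * Real.pi * Complex.I / p) with hζdef
  have hζ : IsPrimitiveRoot ζ p := Complex.isPrimitiveRoot_exp p hp.ne_zero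
  set F : G → (Fin m → ZMod p) := fun g => Multiplicative.toAdd (f g) with hFdef
  have hF : ∀ g g', F (g * g') = F g + F g' := by
    intro g g'; simp [hFdef, map_mul]
  have hF1 : F 1 = 0 := by simp [hFdef]
  have hFsurj : ∀ w : Fin m → ZMod p, ∃ g, F g = w := by
    intro w
    obtain ⟨g, hg⟩ := hf (Multiplicative.ofAdd w)
    exact ⟨g, by simp [hFdef, hg]⟩
  set S : (Fin m → ZMod p) → ℂ := fun v => ∑ a ∈ A, ζ ^ (ip v (F a)).val with hSdef
  set U : (Fin m → ZMod p) → ℂ := fun v => ∑ b ∈ B, ζ ^ (ip v (F b)).val with hUdef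
  have hpm : p ^ m ∣ Fintype.card G := pm_dvd_cardG f hf
  have hpdvd : p ∣ Fintype.card G := dvd_trans (dvd_pow_self p (by omega)) hpm
  have hGpos : 1 ≤ Fintype.card G := Fintype.card_pos
  have hAnd : ¬ p ∣ A.card := by
    intro hdvd
    have h3 : p ∣ A.card * B.card := Dvd.dvd.mul_right hdvd _
    rw [h1] at h3
    have h4 : p ∣ Fintype.card G - (Fintype.card G - 1) := Nat.dvd_sub hpdvd h3
    have h5 : Fintype.card G - (Fintype.card G - 1) = 1 := by omega
    rw [h5] at h4
    exact hp.one_lt.ne' (Nat.dvd_one.mp h4)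
  have hBnd : ¬ p ∣ B.card := by
    intro hdvd
    have h3 : p ∣ A.card * B.card := Dvd.dvd.mul_left hdvd _
    rw [h1] at h3
    have h4 : p ∣ Fintype.card G - (Fintype.card G - 1) := Nat.dvd_sub hpdvd h3
    have h5 : Fintype.card G - (Fintype.card G - 1) = 1 := by omega
    rw [h5] at h4
    exact hp.one_lt.ne' (Nat.dvd_one.mp h4)
  have hchar : ∀ (v : Fin m → ZMod p) (g g' : G),
      ζ ^ (ip v (F (g * g'))).val = ζ ^ (ip v (F g)).val * ζ ^ (ip v (F g')).val := by
    intro v g g'; rw [hF, ip_add_right, xi_add hζ]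
  have hSU : ∀ v : Fin m → ZMod p, v ≠ 0 → S v * U v = -1 := by
    intro v hv
    rw [hSdef, hUdef]
    show (∑ a ∈ A, ζ ^ (ip v (F a)).val) * (∑ b ∈ B, ζ ^ (ip v (F b)).val) = -1
    rw [Finset.sum_mul_sum]
    have hstep : ∑ a ∈ A, ∑ b ∈ B, (ζ ^ (ip v (F a)).val * ζ ^ (ip v (F b)).val)
        = ∑ x ∈ A ×ˢ B, ζ ^ (ip v (F (x.1 * x.2))).val := by
      rw [Finset.sum_product]
      exact Finset.sum_congr rfl fun a _ =>
        Finset.sum_congr rfl fun b _ => (hchar v a b).symm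
    rw [hstep, sum_mul_pairs h1 h2 (fun g => ζ ^ (ip v (F g)).val)]
    have hsdiff : ∑ g ∈ Finset.univ \ {1}, ζ ^ (ip v (F g)).val
        = (∑ g : G, ζ ^ (ip v (F g)).val) - ζ ^ (ip v (F 1)).val := by
      rw [Finset.sum_sdiff_eq_sub (by simp), Finset.sum_singleton]
    rw [hsdiff, hF1, ip_zero_right]
    obtain ⟨w, hw⟩ := ip_exists_ne v hv
    obtain ⟨g₀, hg₀⟩ := hFsurj w
    have hzero : ∑ g : G, ζ ^ (ip v (F g)).val = 0 := by
      refine sum_char_eq_zero_mul _ (hchar v) g₀ ?_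
      rw [hg₀]
      exact xi_ne_one hζ (by rwa [ip_comm])
    rw [hzero]
    simp [ZMod.val_zero]
  have hS0 : S 0 = (A.card : ℂ) := by
    rw [hSdef]
    show ∑ a ∈ A, ζ ^ (ip 0 (F a)).val = (A.card : ℂ)
    have : ∀ a ∈ A, ζ ^ (ip 0 (F a)).val = 1 := by
      intro a _; rw [ip_zero_left, ZMod.val_zero, pow_zero]
    rw [Finset.sum_congr rfl this, Finset.sum_const, nsmul_eq_mul, mul_one]
  set N : (Fin m → ZMod p) → ℂ := fun v => ∏ t : (ZMod p)ˣ, S ((t : ZMod p) • v) with hNdef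
  set M : (Fin m → ZMod p) → ℂ := fun v => ∏ t : (ZMod p)ˣ, U ((t : ZMod p) • v) with hMdef
  have hcardunits : Fintype.card (ZMod p)ˣ = p - 1 := by
    rw [ZMod.card_units_eq_totient, Nat.totient_prime hp]
  have hevens : Even (p - 1) := Nat.Odd.sub_odd hodd odd_one
  have htvne : ∀ (t : (ZMod p)ˣ) (v : Fin m → ZMod p), v ≠ 0 → (t : ZMod p) • v ≠ 0 := by
    intro t v hv hzero
    rcases smul_eq_zero.mp hzero with h | h
    · exact Units.ne_zero t h
    · exact hv h
  have hNM : ∀ v : Fin m → ZMod p, v ≠ 0 → N v * M v = 1 := by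
    intro v hv
    rw [hNdef, hMdef]
    show (∏ t : (ZMod p)ˣ, S ((t : ZMod p) • v)) * (∏ t : (ZMod p)ˣ, U ((t : ZMod p) • v)) = 1
    rw [← Finset.prod_mul_distrib]
    have : ∀ t : (ZMod p)ˣ, t ∈ Finset.univ →
        S ((t : ZMod p) • v) * U ((t : ZMod p) • v) = -1 := fun t _ => hSU _ (htvne t v hv)
    rw [Finset.prod_congr rfl this, Finset.prod_const, Finset.card_univ, hcardunits]
    exact Even.neg_one_pow hevens
  have hSt : ∀ (v : Fin m → ZMod p) (t : (ZMod p)ˣ),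
      S ((t : ZMod p) • v) = ∑ a ∈ A, ζ ^ (((t : ZMod p)) * ip v (F a)).val := by
    intro v t
    rw [hSdef]
    exact Finset.sum_congr rfl fun a _ => by rw [ip_smul_left]
  have hUt : ∀ (v : Fin m → ZMod p) (t : (ZMod p)ˣ),
      U ((t : ZMod p) • v) = ∑ b ∈ B, ζ ^ (((t : ZMod p)) * ip v (F b)).val := by
    intro v t
    rw [hUdef]
    exact Finset.sum_congr rfl fun b _ => by rw [ip_smul_left]
  have hNv : ∀ v : Fin m → ZMod p, v ≠ 0 → N v = 1 := by
    intro v hv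
    obtain ⟨KA, hKA, hKAmod⟩ := prod_char_sum_int hζ A (fun a => ip v (F a))
    obtain ⟨KB, hKB, hKBmod⟩ := prod_char_sum_int hζ B (fun b => ip v (F b))
    have hN : N v = (KA : ℂ) := by
      rw [hNdef]
      show (∏ t : (ZMod p)ˣ, S ((t : ZMod p) • v)) = (KA : ℂ)
      rw [Finset.prod_congr rfl (fun t _ => hSt v t)]
      exact hKA
    have hM : M v = (KB : ℂ) := by
      rw [hMdef]
      show (∏ t : (ZMod p)ˣ, U ((t : ZMod p) • v)) = (KB : ℂ)
      rw [Finset.prod_congr rfl (fun t _ => hUt v t)]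
      exact hKB
    have hZint : KA * KB = 1 := by
      have hc : ((KA * KB : ℤ) : ℂ) = 1 := by
        push_cast
        rw [← hN, ← hM]
        exact hNM v hv
      exact_mod_cast hc
    have hKA1 : (KA : ZMod p) = 1 := by
      have hcast : ((KA : ℤ) : ZMod p) = (((A.card : ℤ)) ^ (p - 1) : ℤ) :=
        (ZMod.intCast_eq_intCast_iff _ _ _).mpr hKAmod
      have hfermat : ((A.card : ZMod p)) ^ (p - 1) = 1 := by
        apply ZMod.pow_card_sub_one_eq_one
        intro hzero
        exact hAnd ((ZMod.natCast_eq_zero_iff _ _).mp hzero)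
      rw [hcast]
      push_cast
      exact hfermat
    rcases Int.mul_eq_one_iff_eq_one_or_neg_one.mp hZint with ⟨hA1, _⟩ | ⟨hA1, _⟩
    · rw [hN, hA1]; norm_num
    · exfalso
      rw [hA1] at hKA1
      push_cast at hKA1
      have h20 : (2 : ZMod p) = 0 := by linear_combination -hKA1
      have : p ∣ 2 := (ZMod.natCast_eq_zero_iff 2 p).mp (by exact_mod_cast h20)
      exact hp2 ((Nat.prime_dvd_prime_iff_eq hp Nat.prime_two).mp this)
  -- grand sum
  set P : ((ZMod p)ˣ → G) → (Fin m → ZMod p) :=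
    fun u => ∑ t : (ZMod p)ˣ, (t : ZMod p) • F (u t) with hPdef
  set UU : Finset ((ZMod p)ˣ → G) := Fintype.piFinset (fun _ => A) with hUUdef
  have hNexp : ∀ v : Fin m → ZMod p, N v = ∑ u ∈ UU, ζ ^ (ip v (P u)).val := by
    intro v
    rw [hNdef]
    show (∏ t : (ZMod p)ˣ, S ((t : ZMod p) • v)) = ∑ u ∈ UU, ζ ^ (ip v (P u)).val
    rw [Finset.prod_congr rfl (fun t _ => hSt v t), Finset.prod_univ_sum]
    refine Finset.sum_congr rfl fun u _ => ?_
    rw [xi_sum_prod hζ]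
    have harg : (∑ t : (ZMod p)ˣ, (t : ZMod p) * ip v (F (u t))) = ip v (P u) := by
      have hPu : P u = ∑ t : (ZMod p)ˣ, (t : ZMod p) • F (u t) := by rw [hPdef]
      rw [hPu, ip_sum_right]
      exact Finset.sum_congr rfl fun t _ => (ip_smul_right _ _ _).symm
    rw [harg]
  set CC : ℕ := (UU.filter (fun u => P u = 0)).card with hCCdef
  have hGrand : ∑ v : Fin m → ZMod p, N v = ((p ^ m * CC : ℕ) : ℂ) := by
    rw [Finset.sum_congr rfl (fun v _ => hNexp v), Finset.sum_comm]
    have : ∀ u ∈ UU, (∑ v : Fin m → ZMod p, ζ ^ (ip v (P u)).val)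
        = if P u = 0 then ((p ^ m : ℕ) : ℂ) else 0 := fun u _ => sum_xi_ip hζ (P u)
    rw [Finset.sum_congr rfl this, ← Finset.sum_filter, Finset.sum_const, nsmul_eq_mul]
    push_cast
    ring
  have hHcard : Fintype.card (Fin m → ZMod p) = p ^ m := by
    rw [Fintype.card_fun, ZMod.card, Fintype.card_fin]
  have hN0 : N 0 = ((A.card ^ (p - 1) : ℕ) : ℂ) := by
    rw [hNdef]
    show (∏ t : (ZMod p)ˣ, S ((t : ZMod p) • (0 : Fin m → ZMod p))) = ((A.card ^ (p - 1) : ℕ) : ℂ)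
    have : ∀ t : (ZMod p)ˣ, t ∈ Finset.univ →
        S ((t : ZMod p) • (0 : Fin m → ZMod p)) = (A.card : ℂ) := by
      intro t _; rw [smul_zero, hS0]
    rw [Finset.prod_congr rfl this, Finset.prod_const, Finset.card_univ, hcardunits]
    push_cast
    ring
  have hLHS : ∑ v : Fin m → ZMod p, N v = ((A.card ^ (p - 1) + (p ^ m - 1) : ℕ) : ℂ) := by
    have hsplit : ∑ v : Fin m → ZMod p, N v
        = N 0 + ∑ v ∈ (Finset.univ : Finset (Fin m → ZMod p)) \ {0}, N v := by
      rw [Finset.sum_sdiff_eq_sub (by simp), Finset.sum_singleton]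
      ring
    have hrest : ∑ v ∈ (Finset.univ : Finset (Fin m → ZMod p)) \ {0}, N v
        = ((p ^ m - 1 : ℕ) : ℂ) := by
      have hc : ∀ v ∈ (Finset.univ : Finset (Fin m → ZMod p)) \ {0}, N v = 1 := by
        intro v hv
        rw [Finset.mem_sdiff, Finset.mem_singleton] at hv
        exact hNv v hv.2
      rw [Finset.sum_congr rfl hc, Finset.sum_const, Finset.card_sdiff_of_subset (by simp),
        Finset.card_univ, hHcard, Finset.card_singleton, nsmul_eq_mul, mul_one]
    rw [hsplit, hN0, hrest]
    push_cast [Nat.one_le_pow m p hp.pos]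
    ring
  have hkey : A.card ^ (p - 1) + (p ^ m - 1) = p ^ m * CC := by
    have := hLHS.symm.trans hGrand
    exact_mod_cast this
  have hq1 : 1 ≤ p ^ m := Nat.one_le_pow _ _ hp.pos
  have hkeyZ : (A.card : ℤ) ^ (p - 1) + ((p : ℤ) ^ m - 1) = (p : ℤ) ^ m * (CC : ℤ) := by
    have := congrArg (Nat.cast : ℕ → ℤ) hkey
    push_cast [hq1] at this
    linarith
  refine (Int.modEq_iff_dvd.mpr ⟨1 - (CC : ℤ), ?_⟩)
  rw [mul_sub, mul_one]
  linarith

end CruxOdd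

lemma abs_le_sq (y : ℤ) : |y| ≤ y ^ 2 := by
  rcases eq_or_ne y 0 with rfl | hy
  · simp
  · have h1 : 1 ≤ |y| := Int.one_le_abs (by omega)
    have h2 : |y| * |y| = y ^ 2 := by rw [abs_mul_abs_self]; ring
    nlinarith [abs_nonneg y]

lemma endgame_two {ι : Type*} [Fintype ι] (mq : ℕ) (hm : 1 ≤ mq)
    (hcard : Fintype.card ι = 2 ^ mq) (Y : ι → ℤ) (c : ℤ) (hceven : Even c)
    (hsum : ∑ i, Y i = 1 - c)
    (hsq : ∑ i, ((2:ℤ) ^ mq * Y i + c) ^ 2 = ((2:ℤ) ^ mq) ^ 2) :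
    c ≡ 0 [ZMOD (2:ℤ) ^ mq] ∨ c ≡ 2 [ZMOD (2:ℤ) ^ mq] := by
  set q : ℤ := (2:ℤ) ^ mq with hqdef
  have hq2 : (2:ℤ) ≤ q := by
    calc (2:ℤ) = 2 ^ 1 := (pow_one 2).symm
    _ ≤ 2 ^ mq := pow_le_pow_right₀ (by norm_num) hm
  have hqpos : (0:ℤ) < q := by linarith
  set q2 : ℤ := (2:ℤ) ^ (mq - 1) with hq2def
  have hq2q : q = 2 * q2 := by
    rw [hq2def, hqdef, ← pow_succ']
    congr 1
    omega
  have hq2pos : (1:ℤ) ≤ q2 := one_le_pow₀ (by norm_num)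
  have hcardZ : ((Fintype.card ι : ℤ)) = q := by rw [hcard]; push_cast [hqdef]; ring
  have hexpand : ∑ i, ((q * Y i + c) ^ 2)
      = q ^ 2 * (∑ i, (Y i) ^ 2) + 2 * q * c * (∑ i, Y i) + q * c ^ 2 := by
    have hterm : ∀ i : ι, (q * Y i + c) ^ 2
        = q ^ 2 * (Y i) ^ 2 + 2 * q * c * Y i + c ^ 2 := fun i => by ring
    rw [Finset.sum_congr rfl (fun i _ => hterm i), Finset.sum_add_distrib,
      Finset.sum_add_distrib, ← Finset.mul_sum, ← Finset.mul_sum, Finset.sum_const,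
      Finset.card_univ, nsmul_eq_mul, hcardZ]

  have hkey : q * ((∑ i, (Y i) ^ 2) - 1) = c * (c - 2) := by
    have h0 : q ^ 2 * (∑ i, (Y i) ^ 2) + 2 * q * c * (1 - c) + q * c ^ 2 = q ^ 2 := by
      rw [← hsum]; rw [hexpand] at hsq; linarith
    have h1 : q * (q * ((∑ i, (Y i) ^ 2) - 1)) = q * (c * (c - 2)) := by
      linear_combination h0
    exact mul_left_cancel₀ (by linarith) h1
  set k : ℤ := (c - 2 + q2) / q with hkdef
  set D : ℤ := (c - 2 + q2) % q with hDdef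
  have hD0 : 0 ≤ D := Int.emod_nonneg _ (by linarith)
  have hDq : D < q := Int.emod_lt_of_pos _ hqpos
  have hDk : c - 2 + q2 = q * k + D := (Int.mul_ediv_add_emod _ _).symm
  set c' : ℤ := D + 2 - q2 with hc'def
  have hcc' : c = c' + q * k := by omega
  set Y' : ι → ℤ := fun i => Y i + k with hY'def
  have hsum' : ∑ i, Y' i = 1 - c' := by
    rw [hY'def]
    rw [Finset.sum_add_distrib, hsum, Finset.sum_const, Finset.card_univ, nsmul_eq_mul, hcardZ]
    omega
  have hsq'exp : ∑ i, (Y' i) ^ 2 = (∑ i, (Y i) ^ 2) + 2 * k * (∑ i, Y i) + q * k ^ 2 := by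
    have hterm : ∀ i : ι, (Y' i) ^ 2 = (Y i) ^ 2 + 2 * k * Y i + k ^ 2 := fun i => by
      rw [hY'def]; ring
    rw [Finset.sum_congr rfl (fun i _ => hterm i), Finset.sum_add_distrib,
      Finset.sum_add_distrib, ← Finset.mul_sum, Finset.sum_const, Finset.card_univ,
      nsmul_eq_mul, hcardZ]
  have hkey' : q * ((∑ i, (Y' i) ^ 2) - 1) = c' * (c' - 2) := by
    rw [hsq'exp, hsum]
    have hc'e : c' = c - q * k := by omega
    rw [hc'e]
    linear_combination hkey
  set β : ℤ := |c' - 1| with hβdef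
  have hqk : q * k = q2 * k + q2 * k := by rw [hq2q]; ring
  have hβ1 : 1 ≤ β := by
    rcases hceven with ⟨t, ht⟩
    have hc'ne1 : c' ≠ 1 := by omega
    rw [hβdef]
    rcases abs_cases (c' - 1) with ⟨h, _⟩ | ⟨h, _⟩ <;> omega
  have hβq2 : β ≤ q2 := by
    rw [hβdef]
    rcases abs_cases (c' - 1) with ⟨h, _⟩ | ⟨h, _⟩ <;> omega
  have habs_sum : β ≤ ∑ i, |Y' i| := by
    calc β = |∑ i, Y' i| := by rw [hsum', hβdef, ← abs_neg]; congr 1; ring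
    _ ≤ ∑ i, |Y' i| := Finset.abs_sum_le_sum_abs _ _
  have hsum_abs_le : ∑ i, |Y' i| ≤ ∑ i, (Y' i) ^ 2 :=
    Finset.sum_le_sum (fun i _ => abs_le_sq (Y' i))
  have hSY2 : β ≤ ∑ i, (Y' i) ^ 2 := le_trans habs_sum hsum_abs_le
  have hβsq : (c' - 1) ^ 2 = β ^ 2 := by rw [hβdef, sq_abs]
  have hq_sy : q * (∑ i, (Y' i) ^ 2) = q + β ^ 2 - 1 := by
    linear_combination hkey' + hβsq
  have hineq : q * β ≤ q + β ^ 2 - 1 := by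
    have h := mul_le_mul_of_nonneg_left hSY2 (le_of_lt hqpos)
    linarith [hq_sy]
  have hβeq : β = 1 := by
    by_contra hne
    have hβ2 : 2 ≤ β := by omega
    have h2βq : 2 * β ≤ q := by rw [hq2q]; linarith
    nlinarith [mul_nonneg (by linarith : (0:ℤ) ≤ β - 1) (by linarith : (0:ℤ) ≤ q - 2 * β),
      sq_nonneg (β - 1)]
  have hc02 : c' = 0 ∨ c' = 2 := by
    rw [hβdef] at hβeq
    rcases abs_cases (c' - 1) with ⟨h, _⟩ | ⟨h, _⟩ <;> omega
  rcases hc02 with h | h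
  · left
    refine Int.ModEq.symm (Int.modEq_iff_dvd.mpr ⟨k, ?_⟩)
    rw [hcc', h]; ring
  · right
    refine Int.ModEq.symm (Int.modEq_iff_dvd.mpr ⟨k, ?_⟩)
    rw [hcc', h]; ring
section CruxTwo

-- η character
private def eta (k : ZMod 2) : ℤ := if k = 0 then 1 else -1

lemma eta_add : ∀ a b : ZMod 2, eta (a + b) = eta a * eta b := by decide
lemma eta_zero : eta 0 = 1 := rfl
lemma eta_one_ne : eta 1 ≠ 1 := by decide
lemma eta_ne_of_ne {k : ZMod 2} (hk : k ≠ 0) : eta k ≠ 1 := by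
  revert hk; revert k; decide

lemma neg_self_zmod2 (w : Fin m' → ZMod 2) : ∀ h : True, True := fun _ => trivial

lemma sum_eta_ip {m : ℕ} (w : Fin m → ZMod 2) :
    haveI : Fact (Nat.Prime 2) := ⟨Nat.prime_two⟩
    ∑ v : Fin m → ZMod 2, eta (ip v w) = if w = 0 then ((2 ^ m : ℕ) : ℤ) else 0 := by
  haveI : Fact (Nat.Prime 2) := ⟨Nat.prime_two⟩
  by_cases hw : w = 0
  · subst hw
    have : ∀ v : Fin m → ZMod 2, eta (ip v 0) = 1 := by
      intro v; rw [ip_zero_right, eta_zero]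
    rw [if_pos rfl, Finset.sum_congr rfl (fun v _ => this v), Finset.sum_const,
      Finset.card_univ, nsmul_eq_mul, mul_one]
    congr 1
    rw [Fintype.card_fun, ZMod.card, Fintype.card_fin]
  · rw [if_neg hw]
    obtain ⟨v₀, hv₀⟩ := ip_exists_ne w hw
    refine sum_char_eq_zero_add (fun v => eta (ip v w)) ?_ v₀ ?_
    · intro x y
      show eta (ip (x + y) w) = eta (ip x w) * eta (ip y w)
      rw [ip_add_left, eta_add]
    · exact eta_ne_of_ne hv₀

lemma crux_two {G : Type*} [Group G] [Fintype G] [DecidableEq G]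
    (m : ℕ) (hm : 1 ≤ m)
    (f : G →* Multiplicative (Fin m → ZMod 2)) (hf : Function.Surjective f)
    (A B : Finset G) (h1 : A.card * B.card = Fintype.card G - 1)
    (h2 : A * B = Finset.univ \ {1}) :
    (A.card : ℤ) ≡ 1 [ZMOD (2:ℤ) ^ m] ∨ (A.card : ℤ) ≡ -1 [ZMOD (2:ℤ) ^ m] := by
  classical
  haveI hfact : Fact (Nat.Prime 2) := ⟨Nat.prime_two⟩
  set F : G → (Fin m → ZMod 2) := fun g => Multiplicative.toAdd (f g) with hFdef
  have hF : ∀ g g', F (g * g') = F g + F g' := by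
    intro g g'; simp [hFdef, map_mul]
  have hF1 : F 1 = 0 := by simp [hFdef]
  have hFsurj : ∀ w : Fin m → ZMod 2, ∃ g, F g = w := by
    intro w
    obtain ⟨g, hg⟩ := hf (Multiplicative.ofAdd w)
    exact ⟨g, by simp [hFdef, hg]⟩
  have hpm : 2 ^ m ∣ Fintype.card G := pm_dvd_cardG f hf
  have h2dvd : 2 ∣ Fintype.card G := dvd_trans (dvd_pow_self 2 (by omega)) hpm
  have hGpos : 1 ≤ Fintype.card G := Fintype.card_pos
  have hAodd : ¬ 2 ∣ A.card := by
    intro hdvd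
    have h3 : 2 ∣ A.card * B.card := Dvd.dvd.mul_right hdvd _
    rw [h1] at h3
    omega
  set S : (Fin m → ZMod 2) → ℤ := fun v => ∑ a ∈ A, eta (ip v (F a)) with hSdef
  set U : (Fin m → ZMod 2) → ℤ := fun v => ∑ b ∈ B, eta (ip v (F b)) with hUdef
  have hchar : ∀ (v : Fin m → ZMod 2) (g g' : G),
      eta (ip v (F (g * g'))) = eta (ip v (F g)) * eta (ip v (F g')) := by
    intro v g g'; rw [hF, ip_add_right, eta_add]
  have hSU : ∀ v : Fin m → ZMod 2, v ≠ 0 → S v * U v = -1 := by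
    intro v hv
    rw [hSdef, hUdef]
    show (∑ a ∈ A, eta (ip v (F a))) * (∑ b ∈ B, eta (ip v (F b))) = -1
    rw [Finset.sum_mul_sum]
    have hstep : ∑ a ∈ A, ∑ b ∈ B, (eta (ip v (F a)) * eta (ip v (F b)))
        = ∑ x ∈ A ×ˢ B, eta (ip v (F (x.1 * x.2))) := by
      rw [Finset.sum_product]
      exact Finset.sum_congr rfl fun a _ =>
        Finset.sum_congr rfl fun b _ => (hchar v a b).symm
    rw [hstep, sum_mul_pairs h1 h2 (fun g => eta (ip v (F g)))]
    have hsdiff : ∑ g ∈ Finset.univ \ {1}, eta (ip v (F g))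
        = (∑ g : G, eta (ip v (F g))) - eta (ip v (F 1)) := by
      rw [Finset.sum_sdiff_eq_sub (by simp), Finset.sum_singleton]
    rw [hsdiff, hF1, ip_zero_right]
    obtain ⟨w, hw⟩ := ip_exists_ne v hv
    obtain ⟨g₀, hg₀⟩ := hFsurj w
    have hzero : ∑ g : G, eta (ip v (F g)) = 0 := by
      refine sum_char_eq_zero_mul _ (hchar v) g₀ ?_
      rw [hg₀]
      exact eta_ne_of_ne (by rwa [ip_comm])
    rw [hzero, eta_zero]
    ring
  have hS0 : S 0 = (A.card : ℤ) := by
    rw [hSdef]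
    show ∑ a ∈ A, eta (ip 0 (F a)) = (A.card : ℤ)
    have : ∀ a ∈ A, eta (ip 0 (F a)) = 1 := by
      intro a _; rw [ip_zero_left, eta_zero]
    rw [Finset.sum_congr rfl this, Finset.sum_const, nsmul_eq_mul, mul_one]
  have hSpm : ∀ v : Fin m → ZMod 2, v ≠ 0 → S v = 1 ∨ S v = -1 := by
    intro v hv
    have hunit : IsUnit (S v) := IsUnit.of_mul_eq_one (-(U v)) (by
      rw [mul_neg, hSU v hv]; ring)
    exact Int.isUnit_iff.mp hunit
  -- char-2 facts on H
  have hneg : ∀ w : Fin m → ZMod 2, -w = w := by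
    intro w; funext i; exact CharTwo.neg_eq (w i)
  have haddself : ∀ w : Fin m → ZMod 2, w + w = 0 := by
    intro w; funext i; exact CharTwo.add_self_eq_zero (w i)
  set q : ℤ := ((2 ^ m : ℕ) : ℤ) with hqdef
  set Kf : (Fin m → ZMod 2) → ℕ := fun h => (A.filter (fun a => F a = h)).card with hKfdef
  have hKfsum : ∑ h : Fin m → ZMod 2, Kf h = A.card :=
    (Finset.card_eq_sum_card_fiberwise (fun a _ => Finset.mem_univ (F a))).symm
  have hW : ∀ h : Fin m → ZMod 2, ∑ v : Fin m → ZMod 2, S v * eta (ip v h)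
      = q * (Kf h : ℤ) := by
    intro h
    have hswap : ∑ v : Fin m → ZMod 2, S v * eta (ip v h)
        = ∑ a ∈ A, ∑ v : Fin m → ZMod 2, eta (ip v (F a + h)) := by
      rw [hSdef]
      simp only [Finset.sum_mul]
      rw [Finset.sum_comm]
      refine Finset.sum_congr rfl fun a _ => Finset.sum_congr rfl fun v _ => ?_
      rw [ip_add_right, eta_add]
    rw [hswap]
    have hterm : ∀ a ∈ A, (∑ v : Fin m → ZMod 2, eta (ip v (F a + h)))
        = if F a = h then q else 0 := by
      intro a _
      rw [sum_eta_ip (F a + h)]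
      by_cases hfa : F a = h
      · rw [if_pos (by rw [hfa, haddself] : F a + h = 0), if_pos hfa]
      · rw [if_neg ?_, if_neg hfa]
        intro hz
        apply hfa
        have hstep : F a + h + h = 0 + h := by rw [hz]
        rwa [add_assoc, haddself, add_zero, zero_add] at hstep
    rw [Finset.sum_congr rfl hterm, ← Finset.sum_filter, Finset.sum_const, nsmul_eq_mul,
      mul_comm]
  set δ : (Fin m → ZMod 2) → ℤ := fun v => if v = 0 then 1 else S v with hδdef
  have hδsq : ∀ v : Fin m → ZMod 2, δ v * δ v = 1 := by
    intro v
    rw [hδdef]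
    by_cases hv : v = 0
    · simp [hv]
    · simp only [if_neg hv]
      rcases hSpm v hv with h | h <;> rw [h] <;> ring
  set Wf : (Fin m → ZMod 2) → ℤ := fun h => ∑ v : Fin m → ZMod 2, δ v * eta (ip v h)
    with hWfdef
  have hHcard : Fintype.card (Fin m → ZMod 2) = 2 ^ m := by
    rw [Fintype.card_fun, ZMod.card, Fintype.card_fin]
  have hWf : ∀ h : Fin m → ZMod 2, Wf h = q * (Kf h : ℤ) + (1 - (A.card : ℤ)) := by
    intro h
    rw [hWfdef]
    show (∑ v : Fin m → ZMod 2, δ v * eta (ip v h)) = q * (Kf h : ℤ) + (1 - (A.card : ℤ))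
    have hterm : ∀ v : Fin m → ZMod 2, δ v * eta (ip v h)
        = S v * eta (ip v h) + (if v = 0 then (1 - S 0) * eta (ip v h) else 0) := by
      intro v
      by_cases hv : v = 0
      · subst hv
        have hδ0 : δ 0 = 1 := by simp [hδdef]
        rw [hδ0, if_pos rfl]; ring
      · have hδv : δ v = S v := by simp [hδdef, hv]
        rw [hδv, if_neg hv]; ring
    rw [Finset.sum_congr rfl (fun v _ => hterm v), Finset.sum_add_distrib,
      Finset.sum_ite_eq' Finset.univ 0 (fun v => (1 - S 0) * eta (ip v h)),
      if_pos (Finset.mem_univ 0), hW h, ip_zero_left, eta_zero, mul_one, hS0]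
  have hPar : ∑ h : Fin m → ZMod 2, (Wf h) ^ 2 = q ^ 2 := by
    have hexp : ∀ h : Fin m → ZMod 2, (Wf h) ^ 2
        = ∑ v : Fin m → ZMod 2, ∑ v' : Fin m → ZMod 2,
            δ v * δ v' * eta (ip (v + v') h) := by
      intro h
      rw [hWfdef]
      show (∑ v : Fin m → ZMod 2, δ v * eta (ip v h)) ^ 2 = _
      rw [sq, Finset.sum_mul_sum]
      refine Finset.sum_congr rfl fun v _ => Finset.sum_congr rfl fun v' _ => ?_
      rw [ip_add_left, eta_add]
      ring
    rw [Finset.sum_congr rfl (fun h _ => hexp h)]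
    rw [Finset.sum_comm]
    have hmid : ∀ v : Fin m → ZMod 2,
        (∑ h : Fin m → ZMod 2, ∑ v' : Fin m → ZMod 2, δ v * δ v' * eta (ip (v + v') h))
        = q := by
      intro v
      rw [Finset.sum_comm]
      have hinner : ∀ v' : Fin m → ZMod 2,
          (∑ h : Fin m → ZMod 2, δ v * δ v' * eta (ip (v + v') h))
          = δ v * δ v' * (if v + v' = 0 then q else 0) := by
        intro v'
        rw [← Finset.mul_sum]
        congr 1
        rw [← sum_eta_ip (v + v')]
        exact Finset.sum_congr rfl fun h _ => by rw [ip_comm]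
      rw [Finset.sum_congr rfl (fun v' _ => hinner v')]
      rw [Finset.sum_eq_single v]
      · rw [if_pos (haddself v), hδsq v, one_mul]
      · intro v' _ hv'
        rw [if_neg, mul_zero]
        intro hz
        apply hv'
        have : v + v' + v = 0 + v := by rw [hz]
        rw [add_comm v v', add_assoc, haddself, add_zero, zero_add] at this
        exact this
      · intro hv; exact absurd (Finset.mem_univ v) hv
    rw [Finset.sum_congr rfl (fun v _ => hmid v), Finset.sum_const, Finset.card_univ,
      hHcard, nsmul_eq_mul, hqdef]
    push_cast
    ring
  -- apply endgame
  have hqpow : q = (2:ℤ) ^ m := by rw [hqdef]; push_cast; ring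
  have hceven : Even (1 - (A.card : ℤ)) := by
    obtain ⟨j, hj⟩ : ∃ j, A.card = 2 * j + 1 := ⟨A.card / 2, by omega⟩
    exact ⟨-j, by push_cast [hj]; ring⟩
  have hsumY : ∑ h : Fin m → ZMod 2, (Kf h : ℤ) = 1 - (1 - (A.card : ℤ)) := by
    rw [← Nat.cast_sum]
    rw [hKfsum]
    ring
  have hsqY : ∑ h : Fin m → ZMod 2, ((2:ℤ) ^ m * (Kf h : ℤ) + (1 - (A.card : ℤ))) ^ 2
      = ((2:ℤ) ^ m) ^ 2 := by
    rw [← hqpow]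
    have : ∀ h : Fin m → ZMod 2, q * (Kf h : ℤ) + (1 - (A.card : ℤ)) = Wf h :=
      fun h => (hWf h).symm
    rw [Finset.sum_congr rfl (fun h _ => by rw [this h])]
    exact hPar
  have hend := endgame_two m hm hHcard (fun h => (Kf h : ℤ)) (1 - (A.card : ℤ))
    hceven hsumY hsqY
  rcases hend with h | h
  · left
    have : (1 : ℤ) - (1 - (A.card : ℤ)) ≡ 1 - 0 [ZMOD (2:ℤ) ^ m] := Int.ModEq.sub rfl h
    simpa using this
  · right
    have : (1 : ℤ) - (1 - (A.card : ℤ)) ≡ 1 - 2 [ZMOD (2:ℤ) ^ m] := Int.ModEq.sub rfl h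
    have h2 : (1:ℤ) - 2 = -1 := by ring
    rw [h2] at this
    simpa using this

end CruxTwo
section Final

lemma near_fact_inv {G : Type*} [Group G] [Fintype G] [DecidableEq G] {A B : Finset G}
    (h2 : A * B = Finset.univ \ {1}) : B⁻¹ * A⁻¹ = Finset.univ \ {1} := by
  ext g
  simp only [Finset.mem_mul, Finset.mem_inv, Finset.mem_sdiff, Finset.mem_univ,
    Finset.mem_singleton, true_and]
  constructor
  · rintro ⟨x, ⟨b, hb, rfl⟩, y, ⟨a, ha, rfl⟩, rfl⟩
    intro hone
    have hab : a * b = 1 := by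
      rw [← mul_inv_rev] at hone
      exact inv_eq_one.mp hone
    have h1mem : (1 : G) ∈ A * B := Finset.mem_mul.mpr ⟨a, ha, b, hb, hab⟩
    rw [h2] at h1mem
    simp at h1mem
  · intro hg
    have hmem : g⁻¹ ∈ A * B := by
      rw [h2]
      simp only [Finset.mem_sdiff, Finset.mem_univ, Finset.mem_singleton, true_and]
      rw [inv_eq_one]
      exact hg
    obtain ⟨a, ha, b, hb, hab⟩ := Finset.mem_mul.mp hmem
    exact ⟨b⁻¹, ⟨b, hb, rfl⟩, a⁻¹, ⟨a, ha, rfl⟩, by rw [← mul_inv_rev, hab, inv_inv]⟩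

end Final


/-- A pair `(A, B)` of subsets of a finite group `G` is a near-factorization of `G`
if `|A| * |B| = |G| - 1` and `A * B = G \ {e}`. -/
def IsNearFactorization {G : Type*} [Group G] [Fintype G] [DecidableEq G]
    (A B : Finset G) : Prop :=
  A.card * B.card = Fintype.card G - 1 ∧ A * B = Finset.univ \ {1}

theorem near_factorization_elementary_abelian_quotient
    {G : Type*} [Group G] [Fintype G] [DecidableEq G]
    (p m : ℕ) (hp : p.Prime) (hm : 1 ≤ m)
    (f : G →* Multiplicative (Fin m → ZMod p)) (hf : Function.Surjective f)
    (A B : Finset G) (h : IsNearFactorization A B) :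
    (Odd p →
        (A.card : ℤ) ^ (p - 1) ≡ 1 [ZMOD (p : ℤ) ^ m] ∧
        (B.card : ℤ) ^ (p - 1) ≡ 1 [ZMOD (p : ℤ) ^ m]) ∧
    (p = 2 →
        ((A.card : ℤ) ≡ 1 [ZMOD (2 : ℤ) ^ m] ∧ (B.card : ℤ) ≡ -1 [ZMOD (2 : ℤ) ^ m]) ∨
        ((A.card : ℤ) ≡ -1 [ZMOD (2 : ℤ) ^ m] ∧ (B.card : ℤ) ≡ 1 [ZMOD (2 : ℤ) ^ m])) := by
  obtain ⟨h1, h2⟩ := h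
  constructor
  · intro hodd
    refine ⟨crux_odd p m hp hodd hm f hf A B h1 h2, ?_⟩
    have h2' : B⁻¹ * A⁻¹ = Finset.univ \ {1} := near_fact_inv h2
    have h1' : B⁻¹.card * A⁻¹.card = Fintype.card G - 1 := by
      rw [Finset.card_inv, Finset.card_inv, mul_comm]
      exact h1
    have hB := crux_odd p m hp hodd hm f hf B⁻¹ A⁻¹ h1' h2'
    rwa [Finset.card_inv] at hB
  · intro hp2
    subst hp2
    have hA := crux_two m hm f hf A B h1 h2
    have hpm : 2 ^ m ∣ Fintype.card G := pm_dvd_cardG f hf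
    have hGpos : 1 ≤ Fintype.card G := Fintype.card_pos
    have hABprod : ((A.card : ℤ)) * (B.card : ℤ) ≡ -1 [ZMOD (2:ℤ) ^ m] := by
      obtain ⟨n, hn⟩ := hpm
      have hcast : ((A.card : ℤ)) * (B.card : ℤ) = (2:ℤ) ^ m * n - 1 := by
        have hc := congrArg (Nat.cast : ℕ → ℤ) h1
        rw [Nat.cast_sub hGpos] at hc
        rw [hn] at hc
        push_cast at hc ⊢
        linarith
      refine Int.modEq_iff_dvd.mpr ⟨-n, ?_⟩
      rw [hcast]
      ring
    rcases hA with hA1 | hA1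
    · left
      refine ⟨hA1, ?_⟩
      have h3 : (A.card : ℤ) * B.card ≡ 1 * B.card [ZMOD (2:ℤ) ^ m] :=
        Int.ModEq.mul_right _ hA1
      have h4 := h3.symm.trans hABprod
      rwa [one_mul] at h4
    · right
      refine ⟨hA1, ?_⟩
      have h3 : (A.card : ℤ) * B.card ≡ (-1) * B.card [ZMOD (2:ℤ) ^ m] :=
        Int.ModEq.mul_right _ hA1
      have h4 := (h3.symm.trans hABprod).neg
      rw [neg_neg] at h4
      have h5 : -((-1:ℤ) * B.card) = (B.card : ℤ) := by ring
      rw [h5] at h4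
      exact h4
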